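/- arXiv:2306.09869 — 3 statements merged into one kernel-verified Lean document; each statement's English description precedes it below -/
import Mathlib

section
/- Let Q ∈ ℝ^{P×d}, K ∈ ℝ^{N×d} with rows kᵢ, α ≥ 0, β > 0. Define the energy E(Q; K) = (α/2) trace(KKᵀ) − ∑_{i=1}^N lse(Q kᵢᵀ, β). Then ∇_K E(Q; K) = αK − softmax₂(β K Qᵀ) Q, where softmax₂ applies softmax along each row of the N×P matrix β K Qᵀ. -/
open scoped BigOperators

/-- For `E(Q; K) = (α/2) trace(KKᵀ) − ∑ᵢ lse(Q kᵢᵀ, β)` we have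
`∇_K E(Q; K) = α K − softmax₂(β K Qᵀ) Q`, where `softmax₂` applies softmax along each
row of the `N×P` matrix `β K Qᵀ`. -/
theorem grad_conditional_energy (P N d : ℕ) (α β : ℝ) (hα : 0 ≤ α) (hβ : 0 < β)
    (Q : Fin P → Fin d → ℝ) (K : Fin N → Fin d → ℝ) :
    DifferentiableAt ℝ
      (fun M : Fin N → Fin d → ℝ =>
        (α / 2) * (∑ i, ∑ j, M i j ^ 2) -
          ∑ i, β⁻¹ * Real.log (∑ j, Real.exp (β * ∑ m, Q j m * M i m))) K ∧
    ∀ H : Fin N → Fin d → ℝ,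
      fderiv ℝ
        (fun M : Fin N → Fin d → ℝ =>
          (α / 2) * (∑ i, ∑ j, M i j ^ 2) -
            ∑ i, β⁻¹ * Real.log (∑ j, Real.exp (β * ∑ m, Q j m * M i m))) K H =
      ∑ p, ∑ q,
        (α * K p q -
          ∑ j, (Real.exp (β * ∑ m, K p m * Q j m) /
              ∑ j', Real.exp (β * ∑ m, K p m * Q j' m)) * Q j q) * H p q := by
  classical
  set pr : Fin N → Fin d → (Fin N → Fin d → ℝ) →L[ℝ] ℝ := fun i m =>
    (ContinuousLinearMap.proj m).comp
      (ContinuousLinearMap.proj i : (Fin N → Fin d → ℝ) →L[ℝ] (Fin d → ℝ)) with hpr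
  have hproj : ∀ (i : Fin N) (m : Fin d),
      HasFDerivAt (fun M : Fin N → Fin d → ℝ => M i m) (pr i m) K :=
    fun i m => (pr i m).hasFDerivAt
  have hsq : ∀ (i : Fin N) (j : Fin d),
      HasFDerivAt (fun M : Fin N → Fin d → ℝ => M i j ^ 2)
        ((2 * K i j) • pr i j) K := by
    intro i j
    have h := (hproj i j).mul (hproj i j)
    simp only [← pow_two] at h
    rw [two_mul, add_smul]
    exact h
  have hquad : HasFDerivAt
      (fun M : Fin N → Fin d → ℝ => (α / 2) * (∑ i, ∑ j, M i j ^ 2))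
      ((α / 2) • ∑ i, ∑ j, (2 * K i j) • pr i j) K :=
    (HasFDerivAt.fun_sum fun i _ => HasFDerivAt.fun_sum fun j _ => hsq i j).const_mul (α / 2)
  have hs : ∀ (i : Fin N) (j : Fin P),
      HasFDerivAt (fun M : Fin N → Fin d → ℝ => ∑ m, Q j m * M i m)
        (∑ m, Q j m • pr i m) K :=
    fun i j => HasFDerivAt.fun_sum fun m _ => (hproj i m).const_mul (Q j m)
  have he : ∀ (i : Fin N) (j : Fin P),
      HasFDerivAt (fun M : Fin N → Fin d → ℝ => Real.exp (β * ∑ m, Q j m * M i m))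
        (Real.exp (β * ∑ m, Q j m * K i m) • (β • ∑ m, Q j m • pr i m)) K :=
    fun i j => ((hs i j).const_mul β).exp
  rcases Nat.eq_zero_or_pos P with hP | hP
  · subst hP
    have hzero : ∀ M : Fin N → Fin d → ℝ,
        (∑ i, β⁻¹ * Real.log (∑ j : Fin 0, Real.exp (β * ∑ m, Q j m * M i m))) = 0 := by
      intro M; simp
    have htot : HasFDerivAt
        (fun M : Fin N → Fin d → ℝ =>
          (α / 2) * (∑ i, ∑ j, M i j ^ 2) -
            ∑ i, β⁻¹ * Real.log (∑ j, Real.exp (β * ∑ m, Q j m * M i m)))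
        ((α / 2) • ∑ i, ∑ j, (2 * K i j) • pr i j) K := by
      simp only [hzero, sub_zero]
      exact hquad
    refine ⟨htot.differentiableAt, fun H => ?_⟩
    rw [htot.fderiv]
    simp only [ContinuousLinearMap.smul_apply, ContinuousLinearMap.coe_sum',
      Finset.sum_apply, hpr, ContinuousLinearMap.coe_comp', Function.comp_apply,
      ContinuousLinearMap.proj_apply, smul_eq_mul, Finset.univ_eq_empty,
      Finset.sum_empty, sub_zero, Finset.mul_sum]
    refine Finset.sum_congr rfl fun p _ => Finset.sum_congr rfl fun q _ => by ring
  · haveI : Nonempty (Fin P) := Fin.pos_iff_nonempty.mp hP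
    have hSpos : ∀ i : Fin N, 0 < ∑ j, Real.exp (β * ∑ m, Q j m * K i m) :=
      fun i => Finset.sum_pos (fun j _ => Real.exp_pos _) Finset.univ_nonempty
    have hlog : ∀ i : Fin N,
        HasFDerivAt (fun M : Fin N → Fin d → ℝ =>
            β⁻¹ * Real.log (∑ j, Real.exp (β * ∑ m, Q j m * M i m)))
          (β⁻¹ • ((∑ j, Real.exp (β * ∑ m, Q j m * K i m))⁻¹ •
            ∑ j, Real.exp (β * ∑ m, Q j m * K i m) • (β • ∑ m, Q j m • pr i m))) K :=
      fun i => ((HasFDerivAt.fun_sum fun j _ => he i j).log (hSpos i).ne').const_mul β⁻¹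
    have htot := hquad.sub (HasFDerivAt.fun_sum fun i (_ : i ∈ Finset.univ) => hlog i)
    refine ⟨htot.differentiableAt, fun H => ?_⟩
    erw [htot.fderiv]
    have hcomm : ∀ (p : Fin N) (j : Fin P),
        (∑ m, K p m * Q j m) = ∑ m, Q j m * K p m :=
      fun p j => Finset.sum_congr rfl fun m _ => mul_comm _ _
    simp only [ContinuousLinearMap.sub_apply, ContinuousLinearMap.smul_apply,
      ContinuousLinearMap.coe_sum', Finset.sum_apply, hpr,
      ContinuousLinearMap.coe_comp', Function.comp_apply,
      ContinuousLinearMap.proj_apply, smul_eq_mul, hcomm, Finset.mul_sum,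
      ← Finset.sum_sub_distrib]
    refine Finset.sum_congr rfl fun p _ => ?_
    have hS := (hSpos p).ne'
    simp only [sub_mul, Finset.sum_sub_distrib]
    congr 1
    · exact Finset.sum_congr rfl fun q _ => by ring
    · simp only [Finset.mul_sum] at hS ⊢
      rw [Finset.sum_comm]
      refine Finset.sum_congr rfl fun q _ => ?_
      rw [Finset.sum_mul]
      refine Finset.sum_congr rfl fun j _ => ?_
      field_simp
end

section
/- Let Q ∈ ℝ^{P×d}, K ∈ ℝ^{N×d}, α ≥ 0, β > 0. Define E(Q; K) = (α/2) trace(KKᵀ) − ∑ᵢ lse(Q kᵢᵀ, β) and E(K) = log ∑ᵢ exp(½ ‖kᵢ‖²). Then the gradient of the log posterior log p(K|Q) := −E(Q; K) − E(K) (up to an additive constant) with respect to K is softmax₂(β K Qᵀ) Q − (αI + D(softmax(½ diag(KKᵀ)))) K, where diag(KKᵀ) ∈ ℝᴺ is the vector of squared row norms (½‖kᵢ‖²)-type entries and D maps a vector to a diagonal matrix. -/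
open scoped BigOperators

noncomputable def Eproj (N d : ℕ) (p : Fin N) (q : Fin d) :
    (Fin N → Fin d → ℝ) →L[ℝ] ℝ :=
  (ContinuousLinearMap.proj (R := ℝ) (φ := fun _ : Fin d => ℝ) q).comp
    (ContinuousLinearMap.proj (R := ℝ) (φ := fun _ : Fin N => Fin d → ℝ) p)

/-- For `E(Q;K) = (α/2) trace(KKᵀ) − ∑ᵢ lse(Q kᵢᵀ, β)` and
`E(K) = log ∑ᵢ exp(½‖kᵢ‖²)`, the gradient of the log posterior
`log p(K|Q) = −E(Q;K) − E(K)` (up to an additive constant) is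
`softmax₂(β K Qᵀ) Q − (α I + D(softmax(½ diag(KKᵀ)))) K`. -/
theorem grad_log_posterior (P N d : ℕ) (α β : ℝ) (hα : 0 ≤ α) (hβ : 0 < β)
    (Q : Fin P → Fin d → ℝ) (K : Fin N → Fin d → ℝ) :
    DifferentiableAt ℝ
      (fun M : Fin N → Fin d → ℝ =>
        -((α / 2) * (∑ i, ∑ j, M i j ^ 2) -
            ∑ i, β⁻¹ * Real.log (∑ j, Real.exp (β * ∑ m, Q j m * M i m))) -
          Real.log (∑ i, Real.exp ((1 / 2) * ∑ j, M i j ^ 2))) K ∧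
    ∀ H : Fin N → Fin d → ℝ,
      fderiv ℝ
        (fun M : Fin N → Fin d → ℝ =>
          -((α / 2) * (∑ i, ∑ j, M i j ^ 2) -
              ∑ i, β⁻¹ * Real.log (∑ j, Real.exp (β * ∑ m, Q j m * M i m))) -
            Real.log (∑ i, Real.exp ((1 / 2) * ∑ j, M i j ^ 2))) K H =
      ∑ p, ∑ q,
        ((∑ j, (Real.exp (β * ∑ m, K p m * Q j m) /
              ∑ j', Real.exp (β * ∑ m, K p m * Q j' m)) * Q j q) -
          (α * K p q +
            (Real.exp ((1 / 2) * ∑ j, K p j ^ 2) /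
                ∑ i, Real.exp ((1 / 2) * ∑ j, K i j ^ 2)) * K p q)) * H p q := by
  have hE : ∀ (p : Fin N) (q : Fin d),
      HasFDerivAt (fun M : Fin N → Fin d → ℝ => M p q) (Eproj N d p q) K :=
    fun p q => (Eproj N d p q).hasFDerivAt
  have hS : ∀ p : Fin N, HasFDerivAt (fun M : Fin N → Fin d → ℝ => ∑ j, M p j ^ 2)
      (∑ j, ((2 : ℝ) * K p j ^ 1) • Eproj N d p j) K := by
    intro p
    refine HasFDerivAt.fun_sum fun j _ => ?_
    have h := (hE p j).mul (hE p j)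
    have hfun : (fun M : Fin N → Fin d → ℝ => M p j ^ 2) =
        fun M => M p j * M p j := by ext M; ring
    rw [hfun, pow_one, two_mul, add_smul]
    exact h
  have hA : HasFDerivAt (fun M : Fin N → Fin d → ℝ => (α / 2) * ∑ i, ∑ j, M i j ^ 2)
      ((α / 2) • (∑ p, ∑ q, ((2 : ℝ) * K p q ^ 1) • Eproj N d p q)) K :=
    (HasFDerivAt.fun_sum fun p _ => hS p).const_mul _
  have hinner : ∀ (i : Fin N) (j : Fin P),
      HasFDerivAt (fun M : Fin N → Fin d → ℝ => ∑ m, Q j m * M i m)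
        (∑ m, Q j m • Eproj N d i m) K :=
    fun i j => HasFDerivAt.fun_sum fun m _ => (hE i m).const_mul (Q j m)
  have hexp : ∀ (i : Fin N) (j : Fin P),
      HasFDerivAt (fun M : Fin N → Fin d → ℝ => Real.exp (β * ∑ m, Q j m * M i m))
        (Real.exp (β * ∑ m, Q j m * K i m) • (β • ∑ m, Q j m • Eproj N d i m)) K :=
    fun i j => ((hinner i j).const_mul β).exp
  have hlog : ∀ i : Fin N,
      HasFDerivAt (fun M : Fin N → Fin d → ℝ =>
          Real.log (∑ j, Real.exp (β * ∑ m, Q j m * M i m)))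
        ((∑ j, Real.exp (β * ∑ m, Q j m * K i m))⁻¹ •
          ∑ j, Real.exp (β * ∑ m, Q j m * K i m) •
            (β • ∑ m, Q j m • Eproj N d i m)) K := by
    intro i
    rcases eq_or_ne P 0 with hP | hP
    · subst hP
      simpa [Finset.univ_eq_empty] using (hasFDerivAt_const (0 : ℝ) K)
    · have : Nonempty (Fin P) := Fin.pos_iff_nonempty.mp (Nat.pos_of_ne_zero hP)
      exact (HasFDerivAt.fun_sum fun j _ => hexp i j).log
        (ne_of_gt (Finset.sum_pos (fun j _ => Real.exp_pos _) Finset.univ_nonempty))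
  have hB : HasFDerivAt (fun M : Fin N → Fin d → ℝ =>
        ∑ i, β⁻¹ * Real.log (∑ j, Real.exp (β * ∑ m, Q j m * M i m)))
      (∑ i, β⁻¹ • ((∑ j, Real.exp (β * ∑ m, Q j m * K i m))⁻¹ •
          ∑ j, Real.exp (β * ∑ m, Q j m * K i m) •
            (β • ∑ m, Q j m • Eproj N d i m))) K :=
    HasFDerivAt.fun_sum fun i _ => (hlog i).const_mul _
  have hw : ∀ i : Fin N,
      HasFDerivAt (fun M : Fin N → Fin d → ℝ => Real.exp ((1 / 2) * ∑ j, M i j ^ 2))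
        (Real.exp ((1 / 2) * ∑ j, K i j ^ 2) •
          ((1 / 2 : ℝ) • ∑ j, ((2 : ℝ) * K i j ^ 1) • Eproj N d i j)) K :=
    fun i => ((hS i).const_mul _).exp
  have hC : HasFDerivAt (fun M : Fin N → Fin d → ℝ =>
        Real.log (∑ i, Real.exp ((1 / 2) * ∑ j, M i j ^ 2)))
      ((∑ i, Real.exp ((1 / 2) * ∑ j, K i j ^ 2))⁻¹ •
        ∑ i, Real.exp ((1 / 2) * ∑ j, K i j ^ 2) •
          ((1 / 2 : ℝ) • ∑ j, ((2 : ℝ) * K i j ^ 1) • Eproj N d i j)) K := by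
    rcases eq_or_ne N 0 with hN | hN
    · subst hN
      simpa [Finset.univ_eq_empty] using (hasFDerivAt_const (0 : ℝ) K)
    · have : Nonempty (Fin N) := Fin.pos_iff_nonempty.mp (Nat.pos_of_ne_zero hN)
      exact (HasFDerivAt.fun_sum fun i _ => hw i).log
        (ne_of_gt (Finset.sum_pos (fun i _ => Real.exp_pos _) Finset.univ_nonempty))
  have hf := ((hA.fun_sub hB).fun_neg).fun_sub hC
  refine ⟨hf.differentiableAt, fun H => ?_⟩
  rw [hf.fderiv]
  simp only [ContinuousLinearMap.coe_sub', Pi.sub_apply, ContinuousLinearMap.neg_apply,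
    ContinuousLinearMap.coe_smul', Pi.smul_apply, ContinuousLinearMap.coe_sum',
    Finset.sum_apply, smul_eq_mul, Eproj, ContinuousLinearMap.coe_comp', Function.comp_apply,
    ContinuousLinearMap.proj_apply, pow_one]
  have hcm : ∀ (p : Fin N) (j : Fin P),
      (∑ m, K p m * Q j m) = ∑ m, Q j m * K p m :=
    fun p j => Finset.sum_congr rfl fun m _ => mul_comm _ _
  simp only [hcm]
  rw [neg_sub, sub_sub]
  simp only [sub_mul, add_mul, Finset.sum_sub_distrib, Finset.sum_add_distrib]
  congr 1
  · -- softmax-attention term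
    simp only [Finset.mul_sum, Finset.sum_mul]
    refine Finset.sum_congr rfl fun p _ => ?_
    conv_rhs => rw [Finset.sum_comm]
    refine Finset.sum_congr rfl fun j _ => Finset.sum_congr rfl fun q _ => ?_
    generalize (∑ x : Fin P, Real.exp (∑ i : Fin d, β * (Q x i * K p i))) = c
    generalize Real.exp (∑ i : Fin d, β * (Q j i * K p i)) = e
    rw [div_eq_mul_inv]
    calc β⁻¹ * (c⁻¹ * (e * (β * (Q j q * H p q))))
        = (β⁻¹ * β) * (e * c⁻¹ * Q j q * H p q) := by ring
      _ = e * c⁻¹ * Q j q * H p q := by rw [inv_mul_cancel₀ hβ.ne', one_mul]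
  congr 1
  · -- α K term
    simp only [Finset.mul_sum]
    exact Finset.sum_congr rfl fun p _ => Finset.sum_congr rfl fun q _ => by ring
  · -- softmax row-norm term
    simp only [Finset.mul_sum]
    refine Finset.sum_congr rfl fun p _ => Finset.sum_congr rfl fun q _ => ?_
    rw [div_eq_mul_inv]
    ring
end

section
/- The Hopfield update rule ζ^{new} = X softmax(β Xᵀ ζ) is exactly one gradient-descent step on the energy E(ζ; X) = ½ ζᵀζ − lse(Xᵀζ, β) with step size η = 1: ζ − 1·∇_ζ E(ζ; X) = X softmax(β Xᵀ ζ). -/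
open scoped BigOperators

/-- The Hopfield update `ζ^{new} = X softmax(β Xᵀ ζ)` is exactly one gradient-descent
step with step size `η = 1` on `E(ζ; X) = ½ ζᵀζ − lse(Xᵀζ, β)`:
`ζ − 1 • ∇_ζ E(ζ; X) = X softmax(β Xᵀ ζ)`. -/
theorem hopfield_update_is_gradient_step (d N : ℕ) (β : ℝ) (hβ : 0 < β)
    (X : Fin d → Fin N → ℝ) (ζ : EuclideanSpace ℝ (Fin d)) :
    ζ - (1 : ℝ) •
        gradient
          (fun z : EuclideanSpace ℝ (Fin d) =>
            (1 / 2) * ∑ j, z j ^ 2 -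
              β⁻¹ * Real.log (∑ i, Real.exp (β * ∑ j, X j i * z j))) ζ =
      (WithLp.toLp 2 (fun j => ∑ i, (Real.exp (β * ∑ j', X j' i * ζ j') /
            ∑ i', Real.exp (β * ∑ j', X j' i' * ζ j')) * X j i) :
        EuclideanSpace ℝ (Fin d)) := by
  classical
  set g : EuclideanSpace ℝ (Fin d) :=
    (WithLp.toLp 2 (fun j => ∑ i, (Real.exp (β * ∑ j', X j' i * ζ j') /
            ∑ i', Real.exp (β * ∑ j', X j' i' * ζ j')) * X j i) :
        EuclideanSpace ℝ (Fin d)) with hg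
  have hproj : ∀ (j : Fin d), HasFDerivAt (fun z : EuclideanSpace ℝ (Fin d) => z j)
      (EuclideanSpace.proj j : EuclideanSpace ℝ (Fin d) →L[ℝ] ℝ) ζ := fun j => by
    simpa using (EuclideanSpace.proj (𝕜 := ℝ) j).hasFDerivAt (x := ζ)
  -- derivative of the quadratic part
  have hsq : ∀ (j : Fin d), HasFDerivAt (fun z : EuclideanSpace ℝ (Fin d) => z j ^ 2)
      ((ζ j • (EuclideanSpace.proj j : EuclideanSpace ℝ (Fin d) →L[ℝ] ℝ)) +
        (ζ j • (EuclideanSpace.proj j : EuclideanSpace ℝ (Fin d) →L[ℝ] ℝ))) ζ := by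
    intro j
    have := (hproj j).fun_mul (hproj j)
    simpa [pow_two] using this
  have hf1 : HasFDerivAt (fun z : EuclideanSpace ℝ (Fin d) => (1 / 2 : ℝ) * ∑ j, z j ^ 2)
      ((1 / 2 : ℝ) • ∑ j, ((ζ j • (EuclideanSpace.proj j : EuclideanSpace ℝ (Fin d) →L[ℝ] ℝ)) +
        (ζ j • (EuclideanSpace.proj j : EuclideanSpace ℝ (Fin d) →L[ℝ] ℝ)))) ζ :=
    (HasFDerivAt.fun_sum fun j _ => hsq j).const_mul _
  rcases Nat.eq_zero_or_pos N with hN | hN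
  · subst hN
    have hfun : (fun z : EuclideanSpace ℝ (Fin d) =>
            (1 / 2) * ∑ j, z j ^ 2 -
              β⁻¹ * Real.log (∑ i, Real.exp (β * ∑ j, X j i * z j))) =
        fun z : EuclideanSpace ℝ (Fin d) => (1 / 2 : ℝ) * ∑ j, z j ^ 2 := by
      funext z; simp
    have hgr : HasGradientAt (fun z : EuclideanSpace ℝ (Fin d) =>
        (1 / 2 : ℝ) * ∑ j, z j ^ 2) ζ ζ := by
      rw [hasGradientAt_iff_hasFDerivAt]
      refine hf1.congr_fderiv (Eq.symm ?_)
      ext v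
      simp [PiLp.inner_apply, ContinuousLinearMap.sum_apply, Finset.mul_sum]
      apply Finset.sum_congr rfl
      intro j _
      ring
    rw [hfun, hgr.gradient, one_smul, sub_self]
    ext j
    simp [hg]
  -- main case : N > 0
  have hS : (0:ℝ) < ∑ i, Real.exp (β * ∑ j, X j i * ζ j) := by
    apply Finset.sum_pos (fun i _ => Real.exp_pos _)
    exact Finset.univ_nonempty_iff.mpr (Fin.pos_iff_nonempty.mp hN)
  set S : ℝ := ∑ i, Real.exp (β * ∑ j, X j i * ζ j) with hSdef
  -- derivative of the log-sum-exp part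
  have hlin : ∀ (i : Fin N), HasFDerivAt
      (fun z : EuclideanSpace ℝ (Fin d) => ∑ j, X j i * z j)
      (∑ j, X j i • (EuclideanSpace.proj j : EuclideanSpace ℝ (Fin d) →L[ℝ] ℝ)) ζ :=
    fun i => HasFDerivAt.fun_sum fun j _ => (hproj j).const_mul (X j i)
  have hexp : ∀ (i : Fin N), HasFDerivAt
      (fun z : EuclideanSpace ℝ (Fin d) => Real.exp (β * ∑ j, X j i * z j))
      (Real.exp (β * ∑ j, X j i * ζ j) •
        (β • ∑ j, X j i • (EuclideanSpace.proj j : EuclideanSpace ℝ (Fin d) →L[ℝ] ℝ))) ζ :=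
    fun i => ((hlin i).const_mul β).exp
  have hSum : HasFDerivAt (fun z : EuclideanSpace ℝ (Fin d) =>
      ∑ i, Real.exp (β * ∑ j, X j i * z j))
      (∑ i, Real.exp (β * ∑ j, X j i * ζ j) •
        (β • ∑ j, X j i • (EuclideanSpace.proj j : EuclideanSpace ℝ (Fin d) →L[ℝ] ℝ))) ζ :=
    HasFDerivAt.fun_sum fun i _ => hexp i
  have hlog := (hSum.log hS.ne').const_mul β⁻¹
  have hf : HasFDerivAt (fun z : EuclideanSpace ℝ (Fin d) =>
            (1 / 2) * ∑ j, z j ^ 2 -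
              β⁻¹ * Real.log (∑ i, Real.exp (β * ∑ j, X j i * z j)))
      (((1 / 2 : ℝ) • ∑ j, ((ζ j • (EuclideanSpace.proj j : EuclideanSpace ℝ (Fin d) →L[ℝ] ℝ)) +
        (ζ j • (EuclideanSpace.proj j : EuclideanSpace ℝ (Fin d) →L[ℝ] ℝ)))) -
        β⁻¹ • (S⁻¹ • (∑ i, Real.exp (β * ∑ j, X j i * ζ j) •
        (β • ∑ j, X j i • (EuclideanSpace.proj j : EuclideanSpace ℝ (Fin d) →L[ℝ] ℝ))))) ζ :=
    hf1.sub hlog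
  have hgr : HasGradientAt (fun z : EuclideanSpace ℝ (Fin d) =>
            (1 / 2) * ∑ j, z j ^ 2 -
              β⁻¹ * Real.log (∑ i, Real.exp (β * ∑ j, X j i * z j))) (ζ - g) ζ := by
    rw [hasGradientAt_iff_hasFDerivAt]
    refine hf.congr_fderiv (Eq.symm ?_)
    ext v
    simp only [InnerProductSpace.toDual_apply_apply, PiLp.inner_apply, RCLike.inner_apply,
      starRingEnd_apply, star_trivial, ContinuousLinearMap.sub_apply,
      ContinuousLinearMap.smul_apply, ContinuousLinearMap.sum_apply,
      ContinuousLinearMap.add_apply, PiLp.proj_apply, smul_eq_mul,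
      PiLp.sub_apply]
    have h1 : ∑ j, v j * (ζ j - g j) = (∑ j, ζ j * v j) - ∑ j, g j * v j := by
      rw [← Finset.sum_sub_distrib]
      exact Finset.sum_congr rfl fun j _ => by ring
    rw [h1]
    congr 1
    · rw [Finset.mul_sum]
      exact Finset.sum_congr rfl fun j _ => by ring
    · -- ∑ j, g j * v j = β⁻¹ * (S⁻¹ * ∑ i, exp_i * (β * ∑ j, X j i * v j))
      rw [hg]
      simp only [← hSdef, PiLp.toLp_apply]
      rw [Finset.mul_sum]
      calc ∑ j, (∑ i, Real.exp (β * ∑ j', X j' i * ζ j') / S * X j i) * v j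
          = ∑ j, ∑ i, Real.exp (β * ∑ j', X j' i * ζ j') / S * X j i * v j :=
            Finset.sum_congr rfl fun j _ => Finset.sum_mul _ _ _
        _ = ∑ i, ∑ j, Real.exp (β * ∑ j', X j' i * ζ j') / S * X j i * v j :=
            Finset.sum_comm
        _ = β⁻¹ * ∑ i, S⁻¹ * (Real.exp (β * ∑ j, X j i * ζ j) *
              (β * ∑ j, X j i * v j)) := by
            rw [Finset.mul_sum]
            apply Finset.sum_congr rfl
            intro i _
            have hβ0 : β ≠ 0 := hβ.ne'
            have hS0 : S ≠ 0 := hS.ne'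
            have ht : β⁻¹ * (S⁻¹ * (Real.exp (β * ∑ j, X j i * ζ j) *
                (β * ∑ j, X j i * v j))) =
                Real.exp (β * ∑ j, X j i * ζ j) / S * ∑ j, X j i * v j := by
              field_simp
            rw [ht, Finset.mul_sum Finset.univ (fun j => X j i * v j)
              (Real.exp (β * ∑ j, X j i * ζ j) / S)]
            exact Finset.sum_congr rfl fun j _ => by ring
  rw [hgr.gradient, one_smul, sub_sub_cancel]
end
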